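/- For any x, x̄, x₀ ∈ ℝⁿ and θ₂ ≥ 0: (θ₂/3)‖x−x₀‖³ ≥ (θ₂/3)‖x̄−x₀‖³ + (θ₂/6)‖x−x̄‖³ + θ₂⟨‖x̄−x₀‖(x̄−x₀), x−x̄⟩. -/
import Mathlib


open scoped RealInnerProductSpace

lemma stmt_7_key (r s d : ℝ) (hr : 0 ≤ r) (hs : 0 ≤ s) (hd : 0 ≤ d) (htri : d ≤ r + s) :
    r^3/3 + d^3/6 + r*((s^2 - r^2 - d^2)/2) ≤ s^3/3 := by
  rcases le_or_gt d (3*r) with h | h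
  · nlinarith [mul_nonneg (mul_nonneg hd hd) (by linarith : (0:ℝ) ≤ 3*r - d),
      mul_nonneg (sq_nonneg (s - r)) (by linarith : (0:ℝ) ≤ 2*s + r)]
  · nlinarith [mul_nonneg (by linarith : (0:ℝ) ≤ r + s - d) (mul_nonneg hd hd),
      mul_nonneg (by linarith : (0:ℝ) ≤ r + s - d) (mul_nonneg hd (by linarith : (0:ℝ) ≤ s+r)),
      mul_nonneg (by linarith : (0:ℝ) ≤ r + s - d) (sq_nonneg (s+r)),
      mul_nonneg hr (sq_nonneg (s - 2*r)),
      mul_nonneg hs (sq_nonneg (s - r)), sq_nonneg (d - s - r)]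

/-- Cubic-term inequality:
(θ₂/3)‖x−x₀‖³ ≥ (θ₂/3)‖x̄−x₀‖³ + (θ₂/6)‖x−x̄‖³ + θ₂⟨‖x̄−x₀‖(x̄−x₀), x−x̄⟩. -/
theorem stmt_7 (n : ℕ) (x xbar x₀ : EuclideanSpace ℝ (Fin n)) (θ₂ : ℝ) (hθ₂ : 0 ≤ θ₂) :
    θ₂ / 3 * ‖x - x₀‖ ^ 3 ≥ θ₂ / 3 * ‖xbar - x₀‖ ^ 3 + θ₂ / 6 * ‖x - xbar‖ ^ 3
      + θ₂ * ⟪‖xbar - x₀‖ • (xbar - x₀), x - xbar⟫ := by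
  set a := xbar - x₀ with ha
  set h := x - xbar with hh
  have hx : x - x₀ = a + h := by rw [ha, hh]; abel
  have hinner : ⟪‖a‖ • a, h⟫ = ‖a‖ * ((‖a + h‖^2 - ‖a‖^2 - ‖h‖^2)/2) := by
    rw [real_inner_smul_left]
    have h2 := norm_add_sq_real a h
    have : ⟪a, h⟫ = (‖a + h‖^2 - ‖a‖^2 - ‖h‖^2)/2 := by linarith
    rw [this]
  rw [hx, hinner]
  have htri : ‖h‖ ≤ ‖a‖ + ‖a + h‖ := by
    have := norm_sub_le (a + h) a
    have he : (a + h) - a = h := by abel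
    rw [he] at this
    linarith
  have key := stmt_7_key ‖a‖ ‖a + h‖ ‖h‖ (norm_nonneg _) (norm_nonneg _) (norm_nonneg _)
    htri
  nlinarith [mul_le_mul_of_nonneg_left key hθ₂]
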